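/- arXiv:2605.16820 — 2 statements merged into one kernel-verified Lean document; each statement's English description precedes it below -/
import Mathlib

section
/- If σ is infinite and v ≠ w, then no finite sequences of stores can make constant arrays with different defaults equal: for all lists L₁ L₂ : List (σ × τ), folding store over L₁ starting from const v is not equal to folding store over L₂ starting from const w. -/
def store {σ τ : Type*} [DecidableEq σ] (a : σ → τ) (i : σ) (u : τ) : σ → τ :=
  fun j => if j = i then u else a j

def constArr {σ τ : Type*} (v : τ) : σ → τ := fun _ => v

def foldStore {σ τ : Type*} [DecidableEq σ] (L : List (σ × τ)) (a : σ → τ) : σ → τ :=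
  L.foldl (fun b p => store b p.1 p.2) a

lemma foldStore_notMem {σ τ : Type*} [DecidableEq σ] (L : List (σ × τ)) (a : σ → τ) (j : σ)
    (h : j ∉ L.map Prod.fst) : foldStore L a j = a j := by
  induction L generalizing a with
  | nil => rfl
  | cons p L ih =>
    simp only [List.map_cons, List.mem_cons, not_or] at h
    have := ih (store a p.1 p.2) h.2
    rw [foldStore, List.foldl_cons]
    rw [foldStore] at this
    rw [this, store, if_neg h.1]

theorem infinite_const_stores_ne {σ τ : Type*} [DecidableEq σ] [Infinite σ]
    (v w : τ) (hvw : v ≠ w) :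
    ∀ L₁ L₂ : List (σ × τ),
      foldStore L₁ (constArr v) ≠ foldStore L₂ (constArr w) := by
  intro L₁ L₂ h
  obtain ⟨j, hj⟩ := (L₁.map Prod.fst ++ L₂.map Prod.fst).toFinset.exists_notMem
  simp only [List.mem_toFinset, List.mem_append, not_or] at hj
  have := congrFun h j
  rw [foldStore_notMem _ _ _ hj.1, foldStore_notMem _ _ _ hj.2] at this
  exact hvw this
end

section
/- If v ≠ w and the store sequences s_v (stores at indices i₁,…,i_l applied to const v) and s_w (stores at indices j₁,…,j_k applied to const w) are equal as arrays, then every element of σ equals one of the indices i₁,…,i_l, j₁,…,j_k; in particular if σ is a fintype then l + k ≥ card σ. -/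
lemma foldStore_not_mem {σ τ : Type*} [DecidableEq σ] (L : List (σ × τ)) (a : σ → τ)
    (x : σ) (hx : x ∉ L.map Prod.fst) : foldStore L a x = a x := by
  induction L generalizing a with
  | nil => rfl
  | cons p L ih =>
    simp only [List.map_cons, List.mem_cons, not_or] at hx
    rw [foldStore, List.foldl_cons, ← foldStore, ih _ hx.2, store, if_neg hx.1]

theorem finite_const_eq_covers {σ τ : Type*} [DecidableEq σ] [Fintype σ]
    (v w : τ) (hvw : v ≠ w) (L₁ L₂ : List (σ × τ))
    (heq : foldStore L₁ (constArr v) = foldStore L₂ (constArr w)) :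
    (∀ x : σ, x ∈ L₁.map Prod.fst ∨ x ∈ L₂.map Prod.fst) ∧
      L₁.length + L₂.length ≥ Fintype.card σ := by
  have hcov : ∀ x : σ, x ∈ L₁.map Prod.fst ∨ x ∈ L₂.map Prod.fst := by
    intro x
    by_contra h
    push_neg at h
    have h1 := foldStore_not_mem L₁ (constArr v) x h.1
    have h2 := foldStore_not_mem L₂ (constArr w) x h.2
    exact hvw (h1.symm.trans ((congrFun heq x).trans h2))
  refine ⟨hcov, ?_⟩
  have hsub : Finset.univ ⊆ (L₁.map Prod.fst ++ L₂.map Prod.fst).toFinset := by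
    intro x _
    rw [List.mem_toFinset, List.mem_append]
    exact hcov x
  calc Fintype.card σ = Finset.univ.card := rfl
    _ ≤ (L₁.map Prod.fst ++ L₂.map Prod.fst).toFinset.card := Finset.card_le_card hsub
    _ ≤ (L₁.map Prod.fst ++ L₂.map Prod.fst).length := List.toFinset_card_le _
    _ = L₁.length + L₂.length := by simp
end
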